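/- Let (G, l) be a finite labelled graph. The maximal core subgraph of a subgraph H ∈ X(G,l) can be obtained from H by repeatedly removing leaves whose valence-one endpoint is unlabelled, and the assignment H ↦ (maximal core subgraph of H) defines an order-preserving map from the poset X(G,l) of proper subgraphs having a component with non-trivial fundamental group or at least two labelled vertices, to the poset C(G,l) of proper core subgraphs; this map restricts to the identity on C(G,l) and satisfies H ⊇ f(H). Consequently the order complex of X(G,l) deformation retracts to the order complex of C(G,l). -/

import Mathlib

open scoped Classical

noncomputable section

universe u v

/-- An abstract simplicial complex on a vertex type `V`, given by its set of
faces (finite subsets of `V`), closed under taking subsets. -/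
structure AbsSC (V : Type u) where
  faces : Set (Finset V)
  down_closed : ∀ s ∈ faces, ∀ t ⊆ s, t ∈ faces

namespace AbsSC

/-- The geometric realization of an abstract simplicial complex: the space of
convex-combination functions supported on a face of the complex. -/
def realization {V : Type u} (K : AbsSC V) : Type u :=
  {f : V → ℝ // ∃ s ∈ K.faces, (∀ v ∉ s, f v = 0) ∧ (∀ v, 0 ≤ f v) ∧ ∑ v ∈ s, f v = 1}

instance {V : Type u} (K : AbsSC V) : TopologicalSpace (realization K) :=
  inferInstanceAs (TopologicalSpace {_f : V → ℝ // _})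

end AbsSC

/-- The order complex of a poset: its simplices are the finite chains. -/
def orderComplex (X : Type u) [Preorder X] : AbsSC X where
  faces := {s | IsChain (· ≤ ·) (↑s : Set X)}
  down_closed := fun _s hs _t hts => hs.mono (Finset.coe_subset.mpr hts)

/-- A finite multigraph (loops and multiple edges allowed): a finite vertex
type, a finite edge type and an endpoint map assigning to each edge an
unordered pair of vertices. -/
structure MGraph where
  V : Type
  E : Type
  [fV : Fintype V]
  [fE : Fintype E]
  ends : E → Sym2 V

attribute [instance] MGraph.fV MGraph.fE

namespace MGraph

variable (G : MGraph)

/-- The valence of a vertex `v` in the (edge-induced) subgraph `H` of `G`: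
the number of half-edges of `H` adjacent to `v` (a loop counts twice). -/
def valence (H : Finset G.E) (v : G.V) : ℕ :=
  ∑ e ∈ H, (if G.ends e = Sym2.diag v then 2 else if v ∈ G.ends e then 1 else 0)

/-- `v` is a vertex of the edge-induced subgraph `H`. -/
def vertexIn (H : Finset G.E) (v : G.V) : Prop := ∃ e ∈ H, v ∈ G.ends e

/-- Two vertices of `G` are connected by an edge path within the subgraph `H`. -/
def vconn (H : Finset G.E) : G.V → G.V → Prop :=
  Relation.ReflTransGen (fun a b => ∃ e ∈ H, G.ends e = s(a, b))

/-- The graph `G` is connected. -/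
def Conn : Prop := ∀ u v : G.V, G.vconn Finset.univ u v

/-- `G` has no isolated vertices. -/
def NoIsolated : Prop := ∀ v : G.V, ∃ e : G.E, v ∈ G.ends e

/-- The subgraph `H` has a connected component with non-trivial fundamental
group, i.e. `H` contains a cycle: equivalently, `H` contains a non-empty edge
subset in which no vertex has valence one. -/
def hasCycle (H : Finset G.E) : Prop :=
  ∃ S : Finset G.E, S ⊆ H ∧ S.Nonempty ∧ ∀ v, G.valence S v ≠ 1

/-- Defining condition of the poset `X(G,l)`: the subgraph `H` has a connected
component with non-trivial fundamental group, or a connected component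
containing at least two labelled vertices. -/
def inX (l : Finset G.V) (H : Finset G.E) : Prop :=
  G.hasCycle H ∨ ∃ u v, u ∈ l ∧ v ∈ l ∧ u ≠ v ∧ G.vconn H u v

/-- The poset `X(G,l)` of proper subgraphs of `G` having a connected component
with non-trivial fundamental group or with at least two labelled vertices,
ordered by inclusion. -/
def XP (l : Finset G.V) : Type :=
  {H : Finset G.E // H ⊂ Finset.univ ∧ G.inX l H}

instance (l : Finset G.V) : PartialOrder (G.XP l) :=
  inferInstanceAs (PartialOrder {_H : Finset G.E // _})

/-- A core subgraph of the labelled graph `(G,l)`: a non-empty subgraph in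
which every vertex of valence one is labelled. -/
def IsCore (l : Finset G.V) (H : Finset G.E) : Prop :=
  H.Nonempty ∧ ∀ v, G.valence H v = 1 → v ∈ l

/-- The edge `e` is separating: removing an interior point of `e` disconnects
`G`; combinatorially, `e` is not a loop and its two endpoints are not connected
in the graph with `e` deleted (in particular, leaves are separating). -/
def Separating (e : G.E) : Prop :=
  ∀ a b, G.ends e = s(a, b) → ¬ G.vconn (Finset.univ.erase e) a b

/-- The edge `e` of `(G,l)` is `l`-separating: it is separating, one of the
components of `G` minus the interior of `e` contains all labelled vertices, and
`G` with `e` deleted satisfies the defining condition of `X(G,l)`. -/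
def LSep (l : Finset G.V) (e : G.E) : Prop :=
  G.Separating e ∧
  (∃ a, a ∈ G.ends e ∧ ∀ u ∈ l, G.vconn (Finset.univ.erase e) a u) ∧
  G.inX l (Finset.univ.erase e)

end MGraph

/-- `A` is a deformation retract of the ambient space `Z`: there is a
retraction of `Z` onto `A` that is homotopic to the identity of `Z`. -/
def IsDeformationRetractOf {Z : Type u} [TopologicalSpace Z] (A : Set Z) : Prop :=
  ∃ r : C(Z, Z), Set.range ⇑r ⊆ A ∧ (∀ a ∈ A, r a = a) ∧
    (ContinuousMap.id Z).Homotopic r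


namespace MGraph

variable {G : MGraph}

lemma valence_mono {S T : Finset G.E} (h : S ⊆ T) (v : G.V) :
    G.valence S v ≤ G.valence T v :=
  Finset.sum_le_sum_of_subset h

lemma one_le_valence {S : Finset G.E} {v : G.V} {e : G.E} (he : e ∈ S) (hv : v ∈ G.ends e) :
    1 ≤ G.valence S v := by
  have : 1 ≤ (if G.ends e = Sym2.diag v then 2 else if v ∈ G.ends e then 1 else 0) := by
    split_ifs <;> omega
  calc 1 ≤ _ := this
  _ ≤ _ := Finset.single_le_sum (f := fun e => (if G.ends e = Sym2.diag v then 2 else if v ∈ G.ends e then 1 else 0)) (fun _ _ => Nat.zero_le _) he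

lemma valence_eq_one {S : Finset G.E} {v : G.V}
    (h : G.valence S v = 1) :
    ∃ e ∈ S, v ∈ G.ends e ∧ G.ends e ≠ Sym2.diag v ∧ ∀ f ∈ S, v ∈ G.ends f → f = e := by
  classical
  set w : G.E → ℕ := fun e => (if G.ends e = Sym2.diag v then 2 else if v ∈ G.ends e then 1 else 0) with hw
  have hsum : ∑ e ∈ S, w e = 1 := h
  have hex : ∃ e ∈ S, w e ≠ 0 := by
    by_contra hc
    push_neg at hc
    rw [Finset.sum_eq_zero hc] at hsum
    omega
  obtain ⟨e, heS, hwe⟩ := hex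
  have hle : w e ≤ 1 := by
    rw [← hsum]
    exact Finset.single_le_sum (fun _ _ => Nat.zero_le _) heS
  have hmem : v ∈ G.ends e := by
    by_contra hm
    have hd : G.ends e ≠ Sym2.diag v := by
      intro hd; exact hm (hd ▸ (by simp [Sym2.diag] : v ∈ Sym2.diag v))
    simp [hw, hd, hm] at hwe
  refine ⟨e, heS, hmem, ?_, ?_⟩
  · intro hd
    simp [hw, hd] at hle
  · intro f hfS hvf
    by_contra hfe
    have hwe1 : 1 ≤ w e := by
      simp only [hw]
      split_ifs with h1 h2 <;> first | omega | exact absurd hmem h2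
    have hwf1 : 1 ≤ w f := by
      simp only [hw]
      split_ifs with h1 h2 <;> first | omega | exact absurd hvf h2
    have h2 : 2 ≤ ∑ g ∈ ({e, f} : Finset G.E), w g := by
      rw [Finset.sum_pair (fun h => hfe h.symm)]
      omega
    have : ∑ g ∈ ({e, f} : Finset G.E), w g ≤ 1 := by
      rw [← hsum]
      exact Finset.sum_le_sum_of_subset (by intro g hg; simp at hg; rcases hg with rfl | rfl <;> assumption)
    omega

lemma vconn_mono {S T : Finset G.E} (h : S ⊆ T) {u v : G.V} (hc : G.vconn S u v) :
    G.vconn T u v :=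
  Relation.ReflTransGen.mono (fun _ _ ⟨e, he, hh⟩ => ⟨e, h he, hh⟩) _ _ hc

lemma vconn_symm {S : Finset G.E} {u v : G.V} (hc : G.vconn S u v) : G.vconn S v u := by
  have hs : Symmetric (fun a b => ∃ e ∈ S, G.ends e = s(a, b)) := by
    intro a b ⟨e, he, hh⟩
    exact ⟨e, he, by rw [hh, Sym2.eq_swap]⟩
  exact (@Relation.ReflTransGen.symmetric _ _ ⟨fun _ _ h => hs h⟩).symm _ _ hc

lemma vconn_head {S : Finset G.E} {u v : G.V} (hc : G.vconn S u v) (huv : u ≠ v) :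
    ∃ e ∈ S, u ∈ G.ends e := by
  rcases hc.cases_head with rfl | ⟨c, ⟨e, he, hh⟩, _⟩
  · exact absurd rfl huv
  · exact ⟨e, he, by rw [hh]; simp⟩

lemma splice {S : Finset G.E} {e : G.E} (he : e ∈ S) {w x : G.V}
    (hx : G.ends e = s(w, x)) (hwx : w ≠ x)
    (huniq : ∀ f ∈ S, w ∈ G.ends f → f = e) {b : G.V} (hb : b ≠ w) :
    ∀ a, G.vconn S a b → G.vconn (S.erase e) (if a = w then x else a) b := by
  intro a hab
  induction hab using Relation.ReflTransGen.head_induction_on with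
  | refl => rw [if_neg hb]; exact Relation.ReflTransGen.refl
  | @head p q hstep _tail ih =>
    obtain ⟨f, hfS, hf⟩ := hstep
    by_cases hfe : f = e
    · subst hfe
      rw [hx] at hf
      rw [Sym2.eq_iff] at hf
      rcases hf with ⟨rfl, rfl⟩ | ⟨rfl, rfl⟩
      · rw [if_pos rfl]
        rwa [if_neg (Ne.symm hwx)] at ih
      · rw [if_neg (Ne.symm hwx)]
        rwa [if_pos rfl] at ih
    · have hwf : w ∉ G.ends f := fun hm => hfe (huniq f hfS hm)
      have hpw : p ≠ w := fun h => hwf (h ▸ (by rw [hf]; simp))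
      have hqw : q ≠ w := fun h => hwf (h ▸ (by rw [hf]; simp))
      rw [if_neg hpw]
      refine Relation.ReflTransGen.head ⟨f, Finset.mem_erase.2 ⟨hfe, hfS⟩, hf⟩ ?_
      rwa [if_neg hqw] at ih

end MGraph

namespace MGraph

variable {G : MGraph}

lemma mem_other {v : G.V} {e : G.E} (h : v ∈ G.ends e) (hd : G.ends e ≠ Sym2.diag v) :
    ∃ x, G.ends e = s(v, x) ∧ v ≠ x := by
  obtain ⟨x, hx⟩ := Sym2.mem_iff_exists.1 h
  refine ⟨x, hx, ?_⟩
  rintro rfl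
  exact hd (by rw [hx]; rfl)

lemma exists_core_of_vconn {l : Finset G.V} {u v : G.V} (hu : u ∈ l) (hv : v ∈ l)
    (huv : u ≠ v) :
    ∀ n (S : Finset G.E), S.card ≤ n → G.vconn S u v → ∃ T ⊆ S, G.IsCore l T := by
  intro n
  induction n with
  | zero =>
    intro S hS hc
    obtain ⟨e, he, _⟩ := vconn_head hc huv
    simp [Finset.card_eq_zero.1 (Nat.le_zero.1 hS)] at he
  | succ n ih =>
    intro S hS hc
    by_cases hall : ∀ z, G.valence S z = 1 → z ∈ l
    · obtain ⟨e, he, _⟩ := vconn_head hc huv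
      exact ⟨S, Finset.Subset.refl S, ⟨e, he⟩, hall⟩
    · push_neg at hall
      obtain ⟨z, hz1, hzl⟩ := hall
      obtain ⟨e, heS, hze, hd, huniq⟩ := valence_eq_one hz1
      obtain ⟨x, hx, hzx⟩ := mem_other hze hd
      have hzu : u ≠ z := fun h => hzl (h ▸ hu)
      have hzv : v ≠ z := fun h => hzl (h ▸ hv)
      have hconn : G.vconn (S.erase e) u v := by
        have := splice heS hx hzx huniq hzv u hc
        rwa [if_neg hzu] at this
      obtain ⟨T, hT, hcore⟩ := ih (S.erase e)
        (by
          have := Finset.card_erase_of_mem heS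
          omega)
        hconn
      exact ⟨T, hT.trans (Finset.erase_subset _ _), hcore⟩

lemma valence_erase_eq_zero {S : Finset G.E} {e : G.E} {w : G.V}
    (huniq : ∀ f ∈ S, w ∈ G.ends f → f = e) :
    G.valence (S.erase e) w = 0 := by
  refine Finset.sum_eq_zero ?_
  intro f hf
  rw [Finset.mem_erase] at hf
  have hwf : w ∉ G.ends f := fun hm => hf.1 (huniq f hf.2 hm)
  have hdf : G.ends f ≠ Sym2.diag w := fun h => hwf (h ▸ (by simp [Sym2.diag]))
  simp [hdf, hwf]

lemma no_vconn_of_isolated {S : Finset G.E} {w b : G.V}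
    (h : ∀ f ∈ S, w ∉ G.ends f) (hwb : w ≠ b) : ¬ G.vconn S w b := by
  intro hc
  obtain ⟨f, hfS, hwf⟩ := vconn_head hc hwb
  exact h f hfS hwf

lemma inX_of_core : ∀ n (l : Finset G.V) (H : Finset G.E), H.card ≤ n → H.Nonempty →
    (∀ v, G.valence H v = 1 → v ∈ l) → G.inX l H := by
  intro n
  induction n with
  | zero =>
    intro l H hcard hne _
    rw [Finset.card_eq_zero.1 (Nat.le_zero.1 hcard)] at hne
    exact absurd hne (by simp)
  | succ n ih =>
    intro l H hcard hne hlab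
    by_cases hcyc : ∀ z, G.valence H z ≠ 1
    · exact Or.inl ⟨H, Finset.Subset.refl H, hne, hcyc⟩
    · push_neg at hcyc
      obtain ⟨w, hw1⟩ := hcyc
      have hwl : w ∈ l := hlab w hw1
      obtain ⟨e, heH, hwe, hd, huniq⟩ := valence_eq_one hw1
      obtain ⟨x, hx, hwx⟩ := mem_other hwe hd
      set H' := H.erase e with hH'
      have hwiso : ∀ f ∈ H', w ∉ G.ends f := by
        intro f hf hm
        rw [Finset.mem_erase] at hf
        exact hf.1 (huniq f hf.2 hm)
      by_cases hne' : H'.Nonempty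
      · have hlab' : ∀ v, G.valence H' v = 1 → v ∈ insert x l := by
          intro v hv1
          by_cases hvx : v = x
          · simp [hvx]
          by_cases hvw : v = w
          · subst hvw
            rw [valence_erase_eq_zero huniq] at hv1
            omega
          · have hve : v ∉ G.ends e := by
              rw [hx]
              simp only [Sym2.mem_iff]
              rintro (rfl | rfl)
              · exact hvw rfl
              · exact hvx rfl
            have : G.valence H v = 1 := by
              rw [← hv1, hH']
              symm
              refine Finset.sum_erase _ ?_
              have hdv : G.ends e ≠ Sym2.diag v := fun h => hve (h ▸ (by simp [Sym2.diag]))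
              simp [hdv, hve]
            exact Finset.mem_insert.2 (Or.inr (hlab v this))
        have hcard' : H'.card ≤ n := by
          have h1 : H'.card = H.card - 1 := by rw [hH']; exact Finset.card_erase_of_mem heH
          have h2 : 1 ≤ H.card := Finset.card_pos.2 ⟨e, heH⟩
          omega
        rcases ih (insert x l) H' hcard' hne' hlab' with hcy | ⟨a, b, ha, hb, hab, hconn⟩
        · obtain ⟨S, hS, hSne, hSv⟩ := hcy
          exact Or.inl ⟨S, hS.trans (Finset.erase_subset _ _), hSne, hSv⟩
        · -- a, b ∈ insert x l
          rcases Finset.mem_insert.1 ha with rfl | hal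
          · -- a = x
            rcases Finset.mem_insert.1 hb with rfl | hbl
            · exact absurd rfl hab
            · -- vconn H' x b, b ∈ l
              have hbw : b ≠ w := by
                rintro rfl
                exact no_vconn_of_isolated hwiso hwx (vconn_symm hconn)
              refine Or.inr ⟨w, b, hwl, hbl, Ne.symm hbw, ?_⟩
              refine Relation.ReflTransGen.head ⟨e, heH, hx⟩ ?_
              exact vconn_mono (Finset.erase_subset _ _) hconn
          · rcases Finset.mem_insert.1 hb with rfl | hbl
            · -- b = x, a ∈ l
              have haw : a ≠ w := by
                rintro rfl
                exact no_vconn_of_isolated hwiso hwx hconn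
              refine Or.inr ⟨a, w, hal, hwl, haw, ?_⟩
              refine Relation.ReflTransGen.trans (vconn_mono (Finset.erase_subset _ _) hconn) ?_
              exact Relation.ReflTransGen.single ⟨e, heH, by rw [hx, Sym2.eq_swap]⟩
            · exact Or.inr ⟨a, b, hal, hbl, hab, vconn_mono (Finset.erase_subset _ _) hconn⟩
      · -- H' empty, so H = {e}
        have hE : H.erase e = ∅ :=
          hH'.symm.trans (Finset.not_nonempty_iff_eq_empty.1 hne') |>.symm ▸
            (hH'.symm.trans (Finset.not_nonempty_iff_eq_empty.1 hne'))
        have hHe : H = {e} := by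
          refine Finset.eq_singleton_iff_unique_mem.2 ⟨heH, fun f hf => ?_⟩
          by_contra hfe
          have hmm : f ∈ H.erase e := Finset.mem_erase.2 ⟨hfe, hf⟩
          rw [hE] at hmm
          simp at hmm
        have hdx : G.ends e ≠ Sym2.diag x := by
          rw [hx]
          intro h
          rw [Sym2.diag, Sym2.eq_iff] at h
          rcases h with ⟨h1, _⟩ | ⟨h1, _⟩ <;> exact hwx h1
        have hxmem : x ∈ G.ends e := by rw [hx]; simp
        have hvx : G.valence H x = 1 := by
          rw [hHe]
          simp [valence, hdx, hxmem]
        have hxl : x ∈ l := hlab x hvx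
        exact Or.inr ⟨w, x, hwl, hxl, hwx, Relation.ReflTransGen.single ⟨e, heH, hx⟩⟩

end MGraph

namespace MGraph

variable {G : MGraph}

/-- The maximal core subgraph: union of all core subsets. -/
def coreOf (G : MGraph) (l : Finset G.V) (H : Finset G.E) : Finset G.E :=
  (H.powerset.filter (fun S => G.IsCore l S)).sup id

lemma coreOf_subset {l : Finset G.V} (H : Finset G.E) : G.coreOf l H ⊆ H := by
  rw [← Finset.le_iff_subset]
  apply Finset.sup_le
  intro S hS
  rw [Finset.mem_filter, Finset.mem_powerset] at hS
  exact hS.1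

lemma subset_coreOf {l : Finset G.V} {H M : Finset G.E} (hMH : M ⊆ H)
    (hM : G.IsCore l M) : M ⊆ G.coreOf l H :=
  Finset.le_sup (f := id) (Finset.mem_filter.2 ⟨Finset.mem_powerset.2 hMH, hM⟩)

lemma coreOf_isCore {l : Finset G.V} {H : Finset G.E}
    (hex : ∃ M, M ⊆ H ∧ G.IsCore l M) : G.IsCore l (G.coreOf l H) := by
  obtain ⟨M, hMH, hM⟩ := hex
  constructor
  · obtain ⟨e, he⟩ := hM.1
    exact ⟨e, subset_coreOf hMH hM he⟩
  · intro v hv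
    obtain ⟨e, heC, hve, _, _⟩ := valence_eq_one hv
    have : ∃ S ∈ H.powerset.filter (fun S => G.IsCore l S), e ∈ id S := by
      rwa [← Finset.mem_sup]
    obtain ⟨S, hS, heS⟩ := this
    rw [Finset.mem_filter, Finset.mem_powerset] at hS
    have h1 : 1 ≤ G.valence S v := one_le_valence heS hve
    have h2 : G.valence S v ≤ G.valence (G.coreOf l H) v :=
      valence_mono (subset_coreOf hS.1 hS.2) v
    have : G.valence S v = 1 := by omega
    exact hS.2.2 v this

lemma exists_core_of_inX {l : Finset G.V} {H : Finset G.E} (h : G.inX l H) :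
    ∃ M, M ⊆ H ∧ G.IsCore l M := by
  rcases h with ⟨S, hS, hne, hval⟩ | ⟨u, v, hu, hv, huv, hconn⟩
  · exact ⟨S, hS, hne, fun v hv => absurd hv (hval v)⟩
  · obtain ⟨T, hT, hcore⟩ := exists_core_of_vconn hu hv huv H.card H le_rfl hconn
    exact ⟨T, hT, hcore⟩

/-- The maximal-core map on the poset `X(G,l)`. -/
def coreMap (G : MGraph) (l : Finset G.V) (H : G.XP l) : G.XP l :=
  ⟨G.coreOf l H.1,
    lt_of_le_of_lt (Finset.le_iff_subset.2 (coreOf_subset H.1)) H.2.1,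
    by
      have hex := exists_core_of_inX H.2.2
      have hcore := coreOf_isCore (G := G) (l := l) (H := H.1) hex
      exact inX_of_core (G.coreOf l H.1).card l _ le_rfl hcore.1 hcore.2⟩

lemma coreMap_monotone (G : MGraph) (l : Finset G.V) : Monotone (G.coreMap l) := by
  intro H H' hle
  have hcore := coreOf_isCore (G := G) (l := l) (exists_core_of_inX H.2.2)
  exact Finset.le_iff_subset.2
    (subset_coreOf ((coreOf_subset H.1).trans hle) hcore)

lemma coreMap_isCore (G : MGraph) (l : Finset G.V) (H : G.XP l) :
    G.IsCore l (G.coreMap l H).1 :=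
  coreOf_isCore (exists_core_of_inX H.2.2)

lemma coreMap_le (G : MGraph) (l : Finset G.V) (H : G.XP l) :
    (G.coreMap l H).1 ⊆ H.1 := coreOf_subset H.1

lemma coreMap_eq_of_isCore (G : MGraph) (l : Finset G.V) (H : G.XP l)
    (h : G.IsCore l H.1) : G.coreMap l H = H := by
  apply Subtype.ext
  exact Finset.Subset.antisymm (coreOf_subset H.1) (subset_coreOf (Finset.Subset.refl _) h)

end MGraph

section Retract

open Finset

variable {P : Type} [PartialOrder P] [Fintype P]

/-- Mass of `φ` strictly below `p` in a fixed linear extension of `P`. -/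
def Bmass (φ : P → ℝ) (p : P) : ℝ :=
  ∑ q ∈ Finset.univ.filter
      (fun q => toLinearExtension q < toLinearExtension p), φ q

/-- Amount of the mass of `φ` at `p` that has been pushed through `f` at time `t`. -/
def bfun (φ : P → ℝ) (t : ℝ) (p : P) : ℝ :=
  max 0 (min (φ p) (t - Bmass φ p))

/-- The prism homotopy between the identity and the simplicial map induced by `f`. -/
def hmap (f : P → P) (φ : P → ℝ) (t : ℝ) (q : P) : ℝ :=
  (φ q - bfun φ t q) + ∑ p ∈ Finset.univ.filter (fun p => f p = q), bfun φ t p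

lemma toLE_strictMono : StrictMono (toLinearExtension (α := P)) :=
  toLinearExtension.monotone.strictMono_of_injective (fun _ _ h => h)

variable {φ : P → ℝ} {t : ℝ}

lemma bfun_nonneg (p : P) : 0 ≤ bfun φ t p := le_max_left _ _

lemma bfun_le (hpos : ∀ p, 0 ≤ φ p) (p : P) : bfun φ t p ≤ φ p :=
  max_le (hpos p) (min_le_left _ _)

lemma Bmass_nonneg (hpos : ∀ p, 0 ≤ φ p) (p : P) : 0 ≤ Bmass φ p :=
  Finset.sum_nonneg (fun q _ => hpos q)

lemma hmap_nonneg (f : P → P) (hpos : ∀ p, 0 ≤ φ p) (q : P) : 0 ≤ hmap f φ t q :=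
  add_nonneg (sub_nonneg.2 (bfun_le hpos q)) (Finset.sum_nonneg fun p _ => bfun_nonneg p)

lemma hmap_sum (f : P → P) : ∑ q, hmap f φ t q = ∑ q, φ q := by
  unfold hmap
  rw [Finset.sum_add_distrib, Finset.sum_sub_distrib,
    Finset.sum_fiberwise_of_maps_to (fun p _ => Finset.mem_univ (f p)) (bfun φ t)]
  ring

lemma bfun_zero (hpos : ∀ p, 0 ≤ φ p) (p : P) : bfun φ 0 p = 0 := by
  have h1 : min (φ p) (0 - Bmass φ p) ≤ 0 := by
    have := Bmass_nonneg hpos p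
    calc min (φ p) (0 - Bmass φ p) ≤ 0 - Bmass φ p := min_le_right _ _
    _ ≤ 0 := by linarith
  exact max_eq_left h1

lemma Bmass_add_le (hpos : ∀ p, 0 ≤ φ p) (p : P) : Bmass φ p + φ p ≤ ∑ q, φ q := by
  have hnot : p ∉ Finset.univ.filter
      (fun q => toLinearExtension q < toLinearExtension p) := by
    simp
  have h1 : Bmass φ p + φ p
      = ∑ q ∈ insert p (Finset.univ.filter
        (fun q => toLinearExtension q < toLinearExtension p)), φ q := by
    rw [Finset.sum_insert hnot, Bmass]; ring
  rw [h1]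
  exact Finset.sum_le_sum_of_subset_of_nonneg (Finset.subset_univ _)
    (fun q _ _ => hpos q)

lemma bfun_one (hpos : ∀ p, 0 ≤ φ p) (hsum : ∑ q, φ q = 1) (p : P) :
    bfun φ 1 p = φ p := by
  have h1 : φ p ≤ 1 - Bmass φ p := by
    have := Bmass_add_le hpos p
    rw [hsum] at this
    linarith
  rw [bfun, min_eq_left h1, max_eq_right (hpos p)]

lemma bfun_ne_zero (hpos : ∀ p, 0 ≤ φ p) {p : P} (h : bfun φ t p ≠ 0) :
    φ p ≠ 0 ∧ Bmass φ p < t := by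
  have hb : 0 < min (φ p) (t - Bmass φ p) := by
    by_contra hc
    push_neg at hc
    exact h (max_eq_left hc)
  rw [lt_min_iff] at hb
  constructor
  · exact ne_of_gt hb.1
  · linarith [hb.2]

lemma afun_ne_zero (hpos : ∀ p, 0 ≤ φ p) {p : P} (h : φ p - bfun φ t p ≠ 0) :
    φ p ≠ 0 ∧ t < Bmass φ p + φ p := by
  have hne : bfun φ t p ≠ φ p := fun hh => h (by rw [hh]; ring)
  constructor
  · intro h0
    apply hne
    have h1 := bfun_le (t := t) hpos p
    have h2 := bfun_nonneg (φ := φ) (t := t) p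
    rw [h0] at h1
    linarith
  · by_contra hc
    push_neg at hc
    have h1 : φ p ≤ t - Bmass φ p := by linarith
    exact hne (by rw [bfun, min_eq_left h1, max_eq_right (hpos p)])

lemma mixed_le (hpos : ∀ p, 0 ≤ φ p) {p q : P} (hcomp : p ≤ q ∨ q ≤ p)
    (ha : φ q - bfun φ t q ≠ 0) (hb : bfun φ t p ≠ 0) : p ≤ q := by
  rcases hcomp with h | h
  · exact h
  · rcases eq_or_lt_of_le h with rfl | hlt
    · exact le_refl _
    · exfalso
      have hq := afun_ne_zero hpos ha
      have hp := bfun_ne_zero hpos hb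
      have hBB : Bmass φ q + φ q ≤ Bmass φ p := by
        have hsub : insert q (Finset.univ.filter
            (fun r => toLinearExtension r < toLinearExtension q))
            ⊆ Finset.univ.filter
              (fun r => toLinearExtension r < toLinearExtension p) := by
          intro r hr
          rcases Finset.mem_insert.1 hr with rfl | hr2
          · exact Finset.mem_filter.2 ⟨Finset.mem_univ _, toLE_strictMono hlt⟩
          · rw [Finset.mem_filter] at hr2 ⊢
            exact ⟨Finset.mem_univ _, lt_trans hr2.2 (toLE_strictMono hlt)⟩
        have hnot : q ∉ Finset.univ.filter
            (fun r => toLinearExtension r < toLinearExtension q) := by simp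
        calc Bmass φ q + φ q
            = ∑ r ∈ insert q (Finset.univ.filter
              (fun r => toLinearExtension r < toLinearExtension q)), φ r := by
              rw [Finset.sum_insert hnot, Bmass]; ring
        _ ≤ Bmass φ p := Finset.sum_le_sum_of_subset_of_nonneg hsub (fun r _ _ => hpos r)
      linarith [hq.2, hp.2]

lemma hmap_ne_cases (f : P → P) {q : P} (h : hmap f φ t q ≠ 0) :
    (φ q - bfun φ t q ≠ 0) ∨ ∃ p, f p = q ∧ bfun φ t p ≠ 0 := by
  by_contra hc
  push_neg at hc
  apply h
  rw [hmap, hc.1, Finset.sum_eq_zero (fun p hp => hc.2 p (Finset.mem_filter.1 hp).2)]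
  ring

end Retract

section Retract2

variable {P : Type} [PartialOrder P] [Fintype P]

local notation "Z" => AbsSC.realization (orderComplex P)

lemma real_pos (φ : Z) : ∀ p, 0 ≤ φ.1 p := by
  obtain ⟨s, _, _, hpos, _⟩ := φ.2
  exact hpos

lemma real_sum (φ : Z) : ∑ q, φ.1 q = 1 := by
  obtain ⟨s, _, hzero, _, hsum⟩ := φ.2
  exact (Finset.sum_subset (Finset.subset_univ s)
    (fun x _ hx => hzero x hx)).symm.trans hsum

lemma real_chain (φ : Z) {p q : P} (hp : φ.1 p ≠ 0) (hq : φ.1 q ≠ 0) :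
    p ≤ q ∨ q ≤ p := by
  obtain ⟨s, hs, hzero, _, _⟩ := φ.2
  have hps : p ∈ s := by by_contra h; exact hp (hzero p h)
  have hqs : q ∈ s := by by_contra h; exact hq (hzero q h)
  rcases eq_or_ne p q with rfl | hne
  · exact Or.inl le_rfl
  · exact hs hps hqs hne

lemma hmap_mem (f : P → P) (hf : Monotone f) (hle : ∀ p, f p ≤ p)
    (φ : Z) (t : ℝ) :
    ∃ s ∈ (orderComplex P).faces, (∀ v ∉ s, hmap f φ.1 t v = 0) ∧
      (∀ v, 0 ≤ hmap f φ.1 t v) ∧ ∑ v ∈ s, hmap f φ.1 t v = 1 := by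
  have hpos := real_pos φ
  refine ⟨Finset.univ.filter (fun q => hmap f φ.1 t q ≠ 0), ?_, ?_, ?_, ?_⟩
  · -- chain condition
    intro q1 hq1 q2 hq2 hne
    simp only [Finset.coe_filter, Set.mem_setOf_eq, Finset.mem_univ, true_and] at hq1 hq2
    rcases hmap_ne_cases f hq1 with ha1 | ⟨p1, hfp1, hb1⟩ <;>
      rcases hmap_ne_cases f hq2 with ha2 | ⟨p2, hfp2, hb2⟩
    · exact real_chain φ (afun_ne_zero hpos ha1).1 (afun_ne_zero hpos ha2).1
    · -- a at q1, b at p2 with f p2 = q2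
      have hcomp := real_chain φ (bfun_ne_zero hpos hb2).1 (afun_ne_zero hpos ha1).1
      have : p2 ≤ q1 := mixed_le hpos hcomp ha1 hb2
      exact Or.inr (hfp2 ▸ ((hle p2).trans this))
    · have hcomp := real_chain φ (bfun_ne_zero hpos hb1).1 (afun_ne_zero hpos ha2).1
      have : p1 ≤ q2 := mixed_le hpos hcomp ha2 hb1
      exact Or.inl (hfp1 ▸ ((hle p1).trans this))
    · rcases eq_or_ne p1 p2 with rfl | hne12
      · exact absurd (hfp1.symm.trans hfp2) hne
      rcases real_chain φ (bfun_ne_zero hpos hb1).1 (bfun_ne_zero hpos hb2).1 with h | h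
      · exact Or.inl (hfp1 ▸ hfp2 ▸ hf h)
      · exact Or.inr (hfp2 ▸ hfp1 ▸ hf h)
  · intro v hv
    simp only [Finset.mem_filter, Finset.mem_univ, true_and, not_not] at hv
    exact hv
  · exact fun v => hmap_nonneg f hpos v
  · rw [Finset.sum_filter_ne_zero, hmap_sum f, real_sum φ]

/-- The point of the realization given by the prism homotopy. -/
def hpt (f : P → P) (hf : Monotone f) (hle : ∀ p, f p ≤ p) (φ : Z) (t : ℝ) : Z :=
  ⟨hmap f φ.1 t, hmap_mem f hf hle φ t⟩

lemma hpt_continuous (f : P → P) (hf : Monotone f) (hle : ∀ p, f p ≤ p) :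
    Continuous (fun x : unitInterval × Z => hpt f hf hle x.2 (x.1 : ℝ)) := by
  apply Continuous.subtype_mk
  apply continuous_pi
  intro q
  have hφ : ∀ p : P, Continuous fun x : unitInterval × Z => x.2.1 p := fun p =>
    (continuous_apply p).comp (continuous_subtype_val.comp continuous_snd)
  have ht : Continuous fun x : unitInterval × Z => (x.1 : ℝ) :=
    continuous_subtype_val.comp continuous_fst
  have hB : ∀ p : P, Continuous fun x : unitInterval × Z => Bmass x.2.1 p := fun p =>
    continuous_finset_sum _ (fun r _ => hφ r)
  have hb : ∀ p : P, Continuous fun x : unitInterval × Z => bfun x.2.1 (x.1 : ℝ) p :=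
    fun p => continuous_const.max ((hφ p).min (ht.sub (hB p)))
  exact ((hφ q).sub (hb q)).add (continuous_finset_sum _ (fun p _ => hb p))

theorem retract_lemma (f : P → P) (C : Set P) (hf : Monotone f) (hle : ∀ p, f p ≤ p)
    (hmem : ∀ p, f p ∈ C) (hfix : ∀ p ∈ C, f p = p) :
    IsDeformationRetractOf
      {φ : Z | ∀ p : P, φ.1 p ≠ 0 → p ∈ C} := by
  have hpos : ∀ φ : Z, ∀ p, 0 ≤ φ.1 p := real_pos
  have key1 : ∀ φ : Z, ∀ q, hmap f φ.1 1 q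
      = ∑ p ∈ Finset.univ.filter (fun p => f p = q), φ.1 p := by
    intro φ q
    rw [hmap, bfun_one (hpos φ) (real_sum φ)]
    rw [Finset.sum_congr rfl (fun p _ => bfun_one (hpos φ) (real_sum φ) p)]
    ring
  refine ⟨⟨fun φ => hpt f hf hle φ 1, ?_⟩, ?_, ?_, ?_⟩
  · -- continuity of r
    have := (hpt_continuous f hf hle).comp
      (Continuous.prodMk (continuous_const (y := (1 : unitInterval))) continuous_id)
    exact this
  · -- range ⊆ A
    rintro _ ⟨φ, rfl⟩
    intro q hq
    simp only [ContinuousMap.coe_mk] at hq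
    have : hmap f φ.1 1 q ≠ 0 := hq
    rw [key1 φ q] at this
    obtain ⟨p, hp, hpne⟩ := Finset.exists_ne_zero_of_sum_ne_zero this
    rw [Finset.mem_filter] at hp
    exact hp.2 ▸ hmem p
  · -- fixes A
    intro φ hφ
    apply Subtype.ext
    funext q
    show hmap f φ.1 1 q = φ.1 q
    rw [key1 φ q]
    apply Finset.sum_eq_single q
    · intro p hp hpq
      by_contra hne
      have hpC := hφ p hne
      rw [Finset.mem_filter] at hp
      exact hpq ((hfix p hpC).symm.trans hp.2)
    · intro hq
      by_contra hne
      have hqC := hφ q hne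
      exact hq (Finset.mem_filter.2 ⟨Finset.mem_univ _, hfix q hqC⟩)
  · -- homotopy
    refine ⟨⟨⟨fun x => hpt f hf hle x.2 (x.1 : ℝ), hpt_continuous f hf hle⟩, ?_, ?_⟩⟩
    · intro φ
      apply Subtype.ext
      funext q
      show hmap f φ.1 ((0 : unitInterval) : ℝ) q = φ.1 q
      rw [show ((0 : unitInterval) : ℝ) = 0 from rfl]
      rw [hmap, bfun_zero (hpos φ),
        Finset.sum_eq_zero (fun p _ => bfun_zero (hpos φ) p)]
      ring
    · intro φ
      apply Subtype.ext
      funext q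
      show hmap f φ.1 ((1 : unitInterval) : ℝ) q = hmap f φ.1 1 q
      rw [show ((1 : unitInterval) : ℝ) = 1 from rfl]

end Retract2
/-- For a finite labelled graph `(G,l)`, sending a subgraph
`H ∈ X(G,l)` to its maximal core subgraph defines an order-preserving map from
`X(G,l)` to the poset `C(G,l)` of proper core subgraphs; it restricts to the
identity on core subgraphs, satisfies `f(H) ⊆ H`, and `f(H)` is the maximal
core subgraph of `H`. Consequently, the order complex of `X(G,l)` deformation
retracts to (the subspace corresponding to) the order complex of `C(G,l)`. -/
theorem maximal_core_retraction
    (G : MGraph) (l : Finset G.V) :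
    ∃ f : G.XP l → G.XP l,
      Monotone f ∧
      (∀ H, (f H).1 ⊆ H.1) ∧
      (∀ H, G.IsCore l (f H).1) ∧
      (∀ H, G.IsCore l H.1 → f H = H) ∧
      (∀ H, ∀ M : Finset G.E, M ⊆ H.1 → G.IsCore l M → M ⊆ (f H).1) ∧
      IsDeformationRetractOf
        {φ : AbsSC.realization (orderComplex (G.XP l)) |
          ∀ H : G.XP l, φ.1 H ≠ 0 → G.IsCore l H.1} := by
  classical
  haveI : Fintype (G.XP l) :=
    inferInstanceAs (Fintype {H : Finset G.E // H ⊂ Finset.univ ∧ G.inX l H})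
  refine ⟨G.coreMap l, MGraph.coreMap_monotone G l, MGraph.coreMap_le G l,
    MGraph.coreMap_isCore G l, MGraph.coreMap_eq_of_isCore G l,
    fun H M hMH hM => MGraph.subset_coreOf hMH hM, ?_⟩
  exact retract_lemma (G.coreMap l) {H : G.XP l | G.IsCore l H.1}
    (MGraph.coreMap_monotone G l) (fun H => MGraph.coreMap_le G l H)
    (fun H => MGraph.coreMap_isCore G l H)
    (fun H hH => MGraph.coreMap_eq_of_isCore G l H hH)
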